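/- arXiv:1911.09088 — 2 statements merged into one kernel-verified Lean document; each statement's English description precedes it below -/
import Mathlib

section
/- Any continuous group homomorphism from Homeo(ω₁) (with the topology of pointwise convergence) to a metrisable topological group is trivial. -/
noncomputable section
open Ordinal Set Topology

/-- The first uncountable ordinal `ω₁`, as a type, endowed with the order topology. -/
def Omega1 : Type 1 := Set.Iio (Ordinal.omega 1)

instance : LinearOrder Omega1 := inferInstanceAs (LinearOrder (Set.Iio (Ordinal.omega 1)))
instance : TopologicalSpace Omega1 := Preorder.topology Omega1
instance : OrderTopology Omega1 := ⟨rfl⟩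

/-- The underlying ordinal of a point of `ω₁`. -/
def Omega1.toOrdinal (x : Omega1) : Ordinal := Subtype.val x

theorem Omega1.toOrdinal_lt (x : Omega1) : x.toOrdinal < Ordinal.omega 1 := Subtype.prop x

/-- Build a point of `ω₁` from a countable ordinal. -/
def Omega1.mk (o : Ordinal) (h : o < Ordinal.omega 1) : Omega1 := Subtype.mk o h

/-- The group structure on the self-homeomorphism group of a topological space. -/
instance {X : Type*} [TopologicalSpace X] : Group (X ≃ₜ X) where
  mul g h := h.trans g
  one := Homeomorph.refl X
  inv := Homeomorph.symm
  mul_assoc _ _ _ := Homeomorph.ext fun _ => rfl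
  one_mul _ := Homeomorph.ext fun _ => rfl
  mul_one _ := Homeomorph.ext fun _ => rfl
  inv_mul_cancel g := Homeomorph.ext fun x => g.symm_apply_apply x

/-- The topology of pointwise convergence on the homeomorphism group of `ω₁`. -/
instance : TopologicalSpace (Omega1 ≃ₜ Omega1) :=
  TopologicalSpace.induced (fun g : Omega1 ≃ₜ Omega1 => (g : Omega1 → Omega1))
    Pi.topologicalSpace

-- AUX
open Cardinal in
lemma add_lt_omega1 {p q : Ordinal} (hp : p < Ordinal.omega 1) (hq : q < Ordinal.omega 1) :
    p + q < Ordinal.omega 1 := by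
  exact Ordinal.isPrincipal_add_omega 1 hp hq

open Cardinal in
lemma bdd_of_countable (s : Set Ordinal) (hc : s.Countable) (hs : ∀ o ∈ s, o < Ordinal.omega 1) :
    ∃ a, a < Ordinal.omega 1 ∧ ∀ o ∈ s, o ≤ a := by
  obtain ⟨f, hf⟩ := (hc.insert 0).exists_eq_range (insert_nonempty _ _)
  refine ⟨⨆ n, f n, ?_, ?_⟩
  · apply Ordinal.iSup_lt_omega_one
    intro n
    have : f n ∈ insert 0 s := hf ▸ mem_range_self n
    rcases this with h | h
    · simp [h, Ordinal.omega_pos]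
    · exact hs _ h
  · intro o ho
    have : o ∈ range f := hf ▸ (mem_insert_iff.mpr (Or.inr ho))
    obtain ⟨n, rfl⟩ := this
    exact Ordinal.le_iSup f n

open Cardinal in
lemma countable_Iic_of_lt {δ : Ordinal} (hδ : δ < Ordinal.omega 1) :
    (Set.Iic δ).Countable := by
  rw [countable_iff_lt_aleph_one]
  have h1 : δ + 1 < Ordinal.omega 1 := add_lt_omega1 hδ (one_lt_omega0.trans Ordinal.omega0_lt_omega_one)
  have h2 : #(Set.Iio (δ + 1)) < ℵ₁ := by
    rw [Ordinal.mk_Iio_ordinal]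
    rw [Cardinal.lift_lt_aleph_one]
    rw [← Cardinal.lt_ord, Cardinal.ord_aleph]
    exact h1
  refine lt_of_le_of_lt (Cardinal.mk_le_mk_of_subset ?_) h2
  intro x hx
  have : x ≤ δ := hx
  have : x < δ + 1 := by rw [Ordinal.add_one_eq_succ]; exact Order.lt_succ_iff.mpr this
  exact this


lemma Omega1.le_def {x y : Omega1} : x ≤ y ↔ x.toOrdinal ≤ y.toOrdinal := Iff.rfl
lemma Omega1.lt_def {x y : Omega1} : x < y ↔ x.toOrdinal < y.toOrdinal := Iff.rfl
lemma Omega1.ext' {x y : Omega1} (h : x.toOrdinal = y.toOrdinal) : x = y := Subtype.ext h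

lemma contCrit {f : Omega1 → Omega1}
    (h1 : ∀ c : Omega1, IsOpen (f ⁻¹' Set.Iio c)) (h2 : ∀ c : Omega1, IsOpen (f ⁻¹' Set.Ioi c)) :
    Continuous f := by
  have hEq : (inferInstance : TopologicalSpace Omega1)
      = TopologicalSpace.generateFrom { s | ∃ a, s = Set.Ioi a ∨ s = Set.Iio a } :=
    OrderTopology.topology_eq_generate_intervals
  have : Continuous[_, TopologicalSpace.generateFrom { s | ∃ a, s = Set.Ioi a ∨ s = Set.Iio a }] f := by
    apply continuous_generateFrom_iff.mpr
    rintro s ⟨c, rfl | rfl⟩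
    exacts [h2 c, h1 c]
  rwa [← hEq] at this

lemma isClopen_Iic {b : Omega1} (hb1 : b.toOrdinal + 1 < Ordinal.omega 1) :
    IsClopen (Set.Iic b) := by
  constructor
  · exact isClosed_Iic
  · have : Set.Iic b = Set.Iio (Omega1.mk (b.toOrdinal + 1) hb1) := by
      ext x
      simp only [mem_Iic, mem_Iio, Omega1.le_def, Omega1.lt_def]
      show x.toOrdinal ≤ b.toOrdinal ↔ x.toOrdinal < b.toOrdinal + 1
      rw [Ordinal.add_one_eq_succ, Order.lt_succ_iff]
    rw [this]
    exact isOpen_Iio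

lemma hb1' {b : Ordinal} (hb : b < Ordinal.omega 1) : b + 1 < Ordinal.omega 1 :=
  add_lt_omega1 hb (Ordinal.one_lt_omega0.trans Ordinal.omega0_lt_omega_one)

/-- `x ↦ (b+1) + x`. -/
def FF {b : Ordinal} (hb : b < Ordinal.omega 1) : Omega1 → Omega1 := fun x =>
  Omega1.mk (b + 1 + x.toOrdinal) (add_lt_omega1 (hb1' hb) x.toOrdinal_lt)

/-- `x ↦ x - (b+1)`. -/
def JJ (b : Ordinal) : Omega1 → Omega1 := fun x =>
  Omega1.mk (x.toOrdinal - (b + 1))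
    (lt_of_le_of_lt (Ordinal.sub_le_self _ _) x.toOrdinal_lt)

lemma FF_cont {b : Ordinal} (hb : b < Ordinal.omega 1) : Continuous (FF hb) := by
  apply contCrit
  · intro c
    have : (FF hb) ⁻¹' Set.Iio c
        = Set.Iio (Omega1.mk (c.toOrdinal - (b + 1))
            (lt_of_le_of_lt (Ordinal.sub_le_self _ _) c.toOrdinal_lt)) := by
      ext x
      simp only [mem_preimage, mem_Iio, Omega1.lt_def]
      show b + 1 + x.toOrdinal < c.toOrdinal ↔ x.toOrdinal < c.toOrdinal - (b+1)
      exact (Ordinal.lt_sub).symm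
    rw [this]; exact isOpen_Iio
  · intro c
    by_cases hc : c.toOrdinal < b + 1
    · have : (FF hb) ⁻¹' Set.Ioi c = Set.univ := by
        ext x
        simp only [mem_preimage, mem_Ioi, mem_univ, iff_true, Omega1.lt_def]
        exact lt_of_lt_of_le hc le_self_add
      rw [this]; exact isOpen_univ
    · push_neg at hc
      have : (FF hb) ⁻¹' Set.Ioi c
          = Set.Ioi (Omega1.mk (c.toOrdinal - (b + 1))
              (lt_of_le_of_lt (Ordinal.sub_le_self _ _) c.toOrdinal_lt)) := by
        ext x
        simp only [mem_preimage, mem_Ioi, Omega1.lt_def]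
        show c.toOrdinal < b + 1 + x.toOrdinal ↔ c.toOrdinal - (b+1) < x.toOrdinal
        conv_lhs => rw [← Ordinal.add_sub_cancel_of_le hc]
        exact add_lt_add_iff_left _
      rw [this]; exact isOpen_Ioi

lemma JJ_cont {b : Ordinal} (hb : b < Ordinal.omega 1) : Continuous (JJ b) := by
  apply contCrit
  · intro c
    by_cases hc : c.toOrdinal = 0
    · have : (JJ b) ⁻¹' Set.Iio c = ∅ := by
        ext x
        simp only [mem_preimage, mem_Iio, mem_empty_iff_false, iff_false, Omega1.lt_def, hc]
        exact not_lt_zero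
      rw [this]; exact isOpen_empty
    · have hc' : 0 < c.toOrdinal := pos_iff_ne_zero.mpr hc
      have : (JJ b) ⁻¹' Set.Iio c
          = Set.Iio (Omega1.mk (b + 1 + c.toOrdinal)
              (add_lt_omega1 (hb1' hb) c.toOrdinal_lt)) := by
        ext x
        simp only [mem_preimage, mem_Iio, Omega1.lt_def]
        show x.toOrdinal - (b+1) < c.toOrdinal ↔ x.toOrdinal < b + 1 + c.toOrdinal
        constructor
        · intro h
          exact lt_of_le_of_lt (Ordinal.le_add_sub _ _) (add_lt_add_right h _)
        · intro h
          exact Ordinal.sub_lt_of_lt_add h hc'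
      rw [this]; exact isOpen_Iio
  · intro c
    have : (JJ b) ⁻¹' Set.Ioi c
        = Set.Ioi (Omega1.mk (b + 1 + c.toOrdinal)
            (add_lt_omega1 (hb1' hb) c.toOrdinal_lt)) := by
      ext x
      simp only [mem_preimage, mem_Ioi, Omega1.lt_def]
      show c.toOrdinal < x.toOrdinal - (b+1) ↔ b + 1 + c.toOrdinal < x.toOrdinal
      exact Ordinal.lt_sub
    rw [this]; exact isOpen_Ioi


lemma one_add_le {b x : Ordinal} (hωb : Ordinal.omega0 ≤ b) (hx : x ≤ b) : 1 + x ≤ b := by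
  by_cases h : Ordinal.omega0 ≤ x
  · rw [Ordinal.one_add_of_omega0_le h]; exact hx
  · push_neg at h
    have : 1 + x < Ordinal.omega0 := Ordinal.principal_add_omega0 Ordinal.one_lt_omega0 h
    exact le_trans this.le hωb

section Swap

variable {b : Ordinal} (hb : b < Ordinal.omega 1) (hωb : Ordinal.omega0 ≤ b)

def swapFun : Omega1 → Omega1 := fun x =>
  if x.toOrdinal ≤ b then FF hb x else if x.toOrdinal ≤ b + b then JJ b x else x

include hωb

lemma FF_mem {x : Omega1} (hx : x.toOrdinal ≤ b) :
    ¬ (FF hb x).toOrdinal ≤ b ∧ (FF hb x).toOrdinal ≤ b + b := by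
  constructor
  · push_neg
    show b < b + 1 + x.toOrdinal
    have h1 : b < b + 1 := by
      have := add_lt_add_right zero_lt_one b
      rwa [add_zero] at this
    exact lt_of_lt_of_le h1 le_self_add
  · show b + 1 + x.toOrdinal ≤ b + b
    rw [add_assoc]
    exact add_le_add_right (one_add_le hωb hx) b

lemma JJ_FF {x : Omega1} : JJ b (FF hb x) = x := by
  apply Omega1.ext'
  show b + 1 + x.toOrdinal - (b + 1) = x.toOrdinal
  exact Ordinal.add_sub_cancel _ _

lemma JJ_mem {x : Omega1} (hx : ¬ x.toOrdinal ≤ b) (hx2 : x.toOrdinal ≤ b + b) :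
    (JJ b x).toOrdinal ≤ b := by
  show x.toOrdinal - (b + 1) ≤ b
  rw [Ordinal.sub_le]
  rw [add_assoc, Ordinal.one_add_of_omega0_le hωb]
  exact hx2

lemma FF_JJ {x : Omega1} (hx : ¬ x.toOrdinal ≤ b) : FF hb (JJ b x) = x := by
  apply Omega1.ext'
  show b + 1 + (x.toOrdinal - (b + 1)) = x.toOrdinal
  apply Ordinal.add_sub_cancel_of_le
  rw [Ordinal.add_one_eq_succ, Order.succ_le_iff]
  exact lt_of_not_ge hx

lemma swap_swap : ∀ x, swapFun hb (swapFun hb x) = x := by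
  intro x
  unfold swapFun
  by_cases h1 : x.toOrdinal ≤ b
  · rw [if_pos h1, if_neg (FF_mem hb hωb h1).1, if_pos (FF_mem hb hωb h1).2]
    exact JJ_FF hb hωb
  · rw [if_neg h1]
    by_cases h2 : x.toOrdinal ≤ b + b
    · rw [if_pos h2, if_pos (JJ_mem hωb h1 h2)]
      exact FF_JJ hb hωb h1
    · rw [if_neg h2, if_neg h1, if_neg h2]

lemma swap_cont : Continuous (swapFun hb) := by
  unfold swapFun
  have hcl1 : IsClopen {x : Omega1 | x.toOrdinal ≤ b} := by
    have : {x : Omega1 | x.toOrdinal ≤ b} = Set.Iic (Omega1.mk b hb) := rfl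
    rw [this]
    exact isClopen_Iic (hb1' hb)
  have hcl2 : IsClopen {x : Omega1 | x.toOrdinal ≤ b + b} := by
    have : {x : Omega1 | x.toOrdinal ≤ b + b} = Set.Iic (Omega1.mk (b + b) (add_lt_omega1 hb hb)) := rfl
    rw [this]
    exact isClopen_Iic (hb1' (add_lt_omega1 hb hb))
  apply Continuous.if
  · rw [hcl1.frontier_eq]
    intro a ha
    exact absurd ha (Set.notMem_empty a)
  · exact FF_cont hb
  · apply Continuous.if
    · rw [hcl2.frontier_eq]
      intro a ha
      exact absurd ha (Set.notMem_empty a)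
    · exact JJ_cont hb
    · exact continuous_id

def swapHomeo : Omega1 ≃ₜ Omega1 where
  toFun := swapFun hb
  invFun := swapFun hb
  left_inv := swap_swap hb hωb
  right_inv := swap_swap hb hωb
  continuous_toFun := swap_cont hb hωb
  continuous_invFun := swap_cont hb hωb

end Swap

/-- Any continuous homomorphism from `Homeo(ω₁)` to a metrisable topological
group is trivial. -/
theorem continuous_hom_to_metrizable_trivial {H : Type*} [Group H]
    [TopologicalSpace H] [IsTopologicalGroup H] [TopologicalSpace.MetrizableSpace H]
    (φ : (Omega1 ≃ₜ Omega1) →* H) (hφ : Continuous φ) :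
    ∀ g : Omega1 ≃ₜ Omega1, φ g = 1 := by
  classical
  obtain ⟨V, hV⟩ := (𝓝 (1 : H)).exists_antitone_basis
  -- finite supports
  have key : ∀ n : ℕ, ∃ I : Set Omega1, I.Finite ∧
      ∀ k : Omega1 ≃ₜ Omega1, (∀ x ∈ I, k x = x) → φ k ∈ V n := by
    intro n
    have h1 : φ ⁻¹' (V n) ∈ 𝓝 (1 : Omega1 ≃ₜ Omega1) := by
      have ht := hφ.tendsto 1
      rw [map_one] at ht
      exact ht (hV.toHasBasis.mem_of_mem trivial)
    have h2 : 𝓝 (1 : Omega1 ≃ₜ Omega1)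
        = Filter.comap (fun g : Omega1 ≃ₜ Omega1 => (g : Omega1 → Omega1))
            (𝓝 ((1 : Omega1 ≃ₜ Omega1) : Omega1 → Omega1)) := nhds_induced _ _
    rw [h2, Filter.mem_comap] at h1
    obtain ⟨S, hS, hSsub⟩ := h1
    rw [nhds_pi, Filter.mem_pi] at hS
    obtain ⟨I, Ifin, t, ht, hts⟩ := hS
    refine ⟨I, Ifin, fun k hk => ?_⟩
    apply hSsub
    apply hts
    intro x hx
    show k x ∈ t x
    rw [hk x hx]
    exact mem_of_mem_nhds (ht x)
  choose I Ifin hI using key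
  -- bound a
  obtain ⟨a, ha, hab⟩ := bdd_of_countable (⋃ n, Omega1.toOrdinal '' I n)
    (countable_iUnion fun n => ((Ifin n).image _).countable)
    (by rintro o ⟨-, ⟨n, rfl⟩, ⟨x, -, rfl⟩⟩; exact x.toOrdinal_lt)
  have kill : ∀ k : Omega1 ≃ₜ Omega1, (∀ x : Omega1, x.toOrdinal ≤ a → k x = x) → φ k = 1 := by
    intro k hk
    have hall : ∀ n, φ k ∈ V n := by
      intro n
      apply hI n k
      intro x hx
      exact hk x (hab _ (mem_iUnion.mpr ⟨n, mem_image_of_mem _ hx⟩))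
    have h1 : (1 : H) ∈ closure {φ k} := by
      rw [mem_closure_iff_nhds]
      intro U hU
      obtain ⟨n, -, hn⟩ := hV.toHasBasis.mem_iff.mp hU
      exact ⟨φ k, hn (hall n), rfl⟩
    rw [closure_singleton, mem_singleton_iff] at h1
    exact h1.symm
  intro g
  -- closing-off step
  have step : ∀ δ : Ordinal, δ < Ordinal.omega 1 → ∃ e, e < Ordinal.omega 1 ∧ δ < e ∧
      ∀ x : Omega1, x.toOrdinal ≤ δ →
        (g x).toOrdinal < e ∧ (g.symm x).toOrdinal < e := by
    intro δ hδ
    set T : Set Ordinal :=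
      (fun x : Omega1 => (g x).toOrdinal) '' {x | x.toOrdinal ≤ δ} ∪
      (fun x : Omega1 => (g.symm x).toOrdinal) '' {x | x.toOrdinal ≤ δ} ∪ {δ} with hT
    have hTc : T.Countable := by
      have hpre : ({x : Omega1 | x.toOrdinal ≤ δ}).Countable := by
        have : {x : Omega1 | x.toOrdinal ≤ δ} = Omega1.toOrdinal ⁻¹' (Set.Iic δ) := rfl
        rw [this]
        exact (countable_Iic_of_lt hδ).preimage (fun x y h => Subtype.ext h)
      exact ((hpre.image _).union (hpre.image _)).union (countable_singleton δ)
    obtain ⟨e₀, he₀, hbd⟩ := bdd_of_countable T hTc (by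
      rintro o ((⟨x, -, rfl⟩ | ⟨x, -, rfl⟩) | rfl)
      · exact (g x).toOrdinal_lt
      · exact (g.symm x).toOrdinal_lt
      · exact hδ)
    refine ⟨e₀ + 1, hb1' he₀, ?_, ?_⟩
    · have : δ ≤ e₀ := hbd δ (by right; rfl)
      rw [Ordinal.add_one_eq_succ]
      exact lt_of_le_of_lt this (Order.lt_succ e₀)
    · intro x hx
      constructor
      · rw [Ordinal.add_one_eq_succ, Order.lt_succ_iff]
        exact hbd _ (Or.inl (Or.inl ⟨x, hx, rfl⟩))
      · rw [Ordinal.add_one_eq_succ, Order.lt_succ_iff]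
        exact hbd _ (Or.inl (Or.inr ⟨x, hx, rfl⟩))
  choose B hB1 hB2 hB3 using step
  -- the sequence
  have ha0 : max (a + 1) (Ordinal.omega0) < Ordinal.omega 1 :=
    max_lt (hb1' ha) Ordinal.omega0_lt_omega_one
  let γ : ℕ → {o : Ordinal // o < Ordinal.omega 1} := fun n =>
    Nat.rec ⟨max (a + 1) (Ordinal.omega0), ha0⟩ (fun _ p => ⟨B p.1 p.2, hB1 p.1 p.2⟩) n
  have hγsucc : ∀ n, (γ n).1 < (γ (n+1)).1 := fun n => hB2 (γ n).1 (γ n).2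
  set b : Ordinal := ⨆ n, (γ n).1 with hbdef
  have hb : b < Ordinal.omega 1 := by
    exact Ordinal.iSup_lt_omega_one (fun n => (γ n).2)
  have hγle : ∀ n, (γ n).1 ≤ b := fun n => Ordinal.le_iSup (fun n => (γ n).1) n
  have hγlt : ∀ n, (γ n).1 < b := fun n => lt_of_lt_of_le (hγsucc n) (hγle (n+1))
  have hab' : a < b := lt_of_lt_of_le (lt_of_lt_of_le (Order.lt_succ a)
    (by rw [← Ordinal.add_one_eq_succ]; exact le_max_left _ _)) (le_of_lt (hγlt 0))
  have hωb : Ordinal.omega0 ≤ b := le_trans (le_max_right (a+1) _) (le_of_lt (hγlt 0))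
  -- closure facts
  have hcl : ∀ x : Omega1, x.toOrdinal < b →
      (g x).toOrdinal < b ∧ (g.symm x).toOrdinal < b := by
    intro x hx
    obtain ⟨n, hn⟩ := Ordinal.lt_iSup_iff.mp hx
    have h3 := hB3 (γ n).1 (γ n).2 x (le_of_lt hn)
    have : B (γ n).1 (γ n).2 = (γ (n+1)).1 := rfl
    rw [this] at h3
    exact ⟨lt_of_lt_of_le h3.1 (hγle (n+1)), lt_of_lt_of_le h3.2 (hγle (n+1))⟩
  set bE : Omega1 := Omega1.mk b hb with hbE
  -- fixed point at b
  have hgb : g bE = bE := by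
    rcases lt_trichotomy (g bE) bE with h | h | h
    · exfalso
      have h1 : (g bE).toOrdinal < b := h
      have h2 := (hcl _ h1).2
      rw [g.symm_apply_apply] at h2
      exact absurd h2 (lt_irrefl b)
    · exact h
    · exfalso
      have hU : g ⁻¹' (Set.Ioi bE) ∈ 𝓝 bE :=
        g.continuous.continuousAt.preimage_mem_nhds (Ioi_mem_nhds h)
      have hγ0b : Omega1.mk (γ 0).1 (γ 0).2 < bE := hγlt 0
      obtain ⟨l, hl, hIoc⟩ := exists_Ioc_subset_of_mem_nhds hU ⟨_, hγ0b⟩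
      obtain ⟨n, hn⟩ := Ordinal.lt_iSup_iff.mp (show l.toOrdinal < b from hl)
      have hp : Omega1.mk (γ n).1 (γ n).2 ∈ Set.Ioc l bE :=
        ⟨hn, le_of_lt (hγlt n)⟩
      have := hIoc hp
      have h2 : b < (g (Omega1.mk (γ n).1 (γ n).2)).toOrdinal := this
      exact absurd (hcl _ (hγlt n)).1 (not_lt_of_gt h2)
  have hgsb : g.symm bE = bE := by
    conv_lhs => rw [← hgb]
    exact g.symm_apply_apply bE
  -- membership iff
  have hmem : ∀ x : Omega1, x.toOrdinal ≤ b ↔ (g x).toOrdinal ≤ b := by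
    intro x
    constructor
    · intro hx
      rcases lt_or_eq_of_le hx with h | h
      · exact le_of_lt (hcl x h).1
      · rw [show x = bE from Subtype.ext h, hgb]
        exact le_rfl
    · intro hx
      rcases lt_or_eq_of_le hx with h | h
      · have := (hcl _ h).2
        rw [g.symm_apply_apply] at this
        exact le_of_lt this
      · have : g x = bE := Subtype.ext h
        have := congrArg g.symm this
        rw [g.symm_apply_apply, hgsb] at this
        rw [this]
        exact le_rfl
  have hmem' : ∀ x : Omega1, x.toOrdinal ≤ b ↔ (g.symm x).toOrdinal ≤ b := by
    intro x
    constructor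
    · intro hx
      rcases lt_or_eq_of_le hx with h | h
      · exact le_of_lt (hcl x h).2
      · rw [show x = bE from Subtype.ext h, hgsb]
        exact le_rfl
    · intro hx
      have := (hmem (g.symm x)).mp hx
      rwa [g.apply_symm_apply] at this
  have hclopen : IsClopen {x : Omega1 | x.toOrdinal ≤ b} := by
    have : {x : Omega1 | x.toOrdinal ≤ b} = Set.Iic bE := rfl
    rw [this]
    exact isClopen_Iic (hb1' hb)
  have hfrontier : ∀ y : Omega1, y ∈ frontier {x : Omega1 | x.toOrdinal ≤ b} → True := fun _ _ => trivial
  let g₁ : Omega1 ≃ₜ Omega1 :=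
  { toFun := fun x => if x.toOrdinal ≤ b then x else g x
    invFun := fun x => if x.toOrdinal ≤ b then x else g.symm x
    left_inv := by
      intro x
      beta_reduce
      by_cases hx : x.toOrdinal ≤ b
      · simp only [if_pos hx]
      · rw [if_neg hx, if_neg (fun h => hx ((hmem x).mpr h)), g.symm_apply_apply]
    right_inv := by
      intro x
      beta_reduce
      by_cases hx : x.toOrdinal ≤ b
      · simp only [if_pos hx]
      · rw [if_neg hx, if_neg (fun h => hx ((hmem' x).mpr h)), g.apply_symm_apply]
    continuous_toFun := Continuous.if
      (by rw [hclopen.frontier_eq]; exact fun y hy => absurd hy (Set.notMem_empty y))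
      continuous_id g.continuous
    continuous_invFun := Continuous.if
      (by rw [hclopen.frontier_eq]; exact fun y hy => absurd hy (Set.notMem_empty y))
      continuous_id g.symm.continuous }
  have hφg₁ : φ g₁ = 1 := by
    apply kill g₁
    intro x hx
    show (if x.toOrdinal ≤ b then x else g x) = x
    rw [if_pos (le_trans hx (le_of_lt hab'))]
  set g₀ : Omega1 ≃ₜ Omega1 := g * g₁⁻¹ with hg₀def
  set hE : Omega1 ≃ₜ Omega1 := swapHomeo hb hωb with hhEdef
  have hEE : hE * hE = 1 := Homeomorph.ext fun x => swap_swap hb hωb x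
  have hkfix : ∀ x : Omega1, x.toOrdinal ≤ a → (hE * g₀ * hE) x = x := by
    intro x hx
    have hxb : x.toOrdinal ≤ b := le_trans hx (le_of_lt hab')
    have hFm := FF_mem hb hωb hxb
    have h1 : hE x = FF hb x := by
      show swapFun hb x = FF hb x
      unfold swapFun
      rw [if_pos hxb]
    have h2 : g₁⁻¹ (FF hb x) = g.symm (FF hb x) := by
      show (if (FF hb x).toOrdinal ≤ b then (FF hb x) else g.symm (FF hb x)) = _
      rw [if_neg hFm.1]
    have h3 : g₀ (FF hb x) = FF hb x := by
      show g (g₁⁻¹ (FF hb x)) = _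
      rw [h2, g.apply_symm_apply]
    show hE (g₀ (hE x)) = x
    rw [h1, h3]
    show swapFun hb (FF hb x) = x
    unfold swapFun
    rw [if_neg hFm.1, if_pos hFm.2]
    exact JJ_FF hb hωb
  have hφk : φ (hE * g₀ * hE) = 1 := kill _ hkfix
  have hφhE2 : φ hE * φ hE = 1 := by rw [← map_mul, hEE, map_one]
  have hφg₀ : φ g₀ = 1 := by
    have e1 : φ hE * φ g₀ * φ hE = 1 := by rw [← map_mul, ← map_mul, hφk]
    have e2 : φ g₀ = (φ hE)⁻¹ * (φ hE * φ g₀ * φ hE) * (φ hE)⁻¹ := by group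
    rw [e2, e1, mul_one, ← mul_inv_rev, hφhE2, inv_one]
  have hdecomp : g = g₀ * g₁ := (inv_mul_cancel_right g g₁).symm
  rw [hdecomp, map_mul, hφg₀, hφg₁, mul_one]
end
end

section
/- The topological group Homeo(ω₁) is not a Baire space: the open sets T_n = ⋃_{n ≤ k < ω} Fix({k}) (for n a positive integer) are each dense, but their intersection is contained in the proper closed subgroup of homeomorphisms fixing ω, hence is not dense. -/
noncomputable section
open Ordinal Set Topology

/-- The natural number `n`, viewed as a point of `ω₁`. -/
def natElt (n : ℕ) : Omega1 :=
  Omega1.mk n ((Ordinal.nat_lt_omega0 n).trans Ordinal.omega0_lt_omega_one)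

/-- The first infinite ordinal `ω`, viewed as a point of `ω₁`. -/
def omegaElt : Omega1 := Omega1.mk Ordinal.omega0 Ordinal.omega0_lt_omega_one

/-- The open set `T n = ⋃_{n ≤ k < ω} Fix({k})` in `Homeo(ω₁)`. -/
def T (n : ℕ) : Set (Omega1 ≃ₜ Omega1) :=
  ⋃ k ∈ {k : ℕ | n ≤ k}, {g : Omega1 ≃ₜ Omega1 | g (natElt k) = natElt k}

namespace Aux

theorem lt_iff {x y : Omega1} : x < y ↔ x.toOrdinal < y.toOrdinal := Subtype.coe_lt_coe.symm
theorem le_iff {x y : Omega1} : x ≤ y ↔ x.toOrdinal ≤ y.toOrdinal := Subtype.coe_le_coe.symm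
theorem ext' {x y : Omega1} (h : x.toOrdinal = y.toOrdinal) : x = y := Subtype.ext h
@[simp] theorem mk_toOrdinal {o : Ordinal} {h : o < Ordinal.omega 1} :
    (Omega1.mk o h).toOrdinal = o := rfl

theorem add_lt_omega1 {a b : Ordinal} (ha : a < Ordinal.omega 1) (hb : b < Ordinal.omega 1) :
    a + b < Ordinal.omega 1 := by
  rw [← Cardinal.ord_aleph, Cardinal.lt_ord] at *
  rw [Ordinal.card_add]
  exact Cardinal.add_lt_of_lt Cardinal.aleph0_lt_aleph_one.le ha hb

theorem one_lt_omega1 : (1 : Ordinal) < Ordinal.omega 1 :=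
  Ordinal.one_lt_omega0.trans Ordinal.omega0_lt_omega_one

theorem isOpen_singleton_of_not_limit {x : Omega1} (h : ¬ Order.IsSuccLimit x.toOrdinal) :
    IsOpen ({x} : Set Omega1) := by
  rcases Ordinal.zero_or_succ_or_isSuccLimit x.toOrdinal with h0 | ⟨a, ha⟩ | hl
  · have : ({x} : Set Omega1) = Set.Iio (Omega1.mk 1 one_lt_omega1) := by
      ext y
      simp only [Set.mem_singleton_iff, Set.mem_Iio]
      constructor
      · rintro rfl
        exact lt_iff.2 (h0 ▸ zero_lt_one)
      · intro hy
        refine ext' ?_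
        have := lt_iff.1 hy
        rw [mk_toOrdinal, Ordinal.lt_one_iff_zero] at this
        rw [this, h0]
    rw [this]; exact isOpen_Iio
  · have ha1 : a < Ordinal.omega 1 := lt_trans (ha ▸ Order.lt_succ a) x.toOrdinal_lt
    have hx1 : x.toOrdinal + 1 < Ordinal.omega 1 := add_lt_omega1 x.toOrdinal_lt one_lt_omega1
    have : ({x} : Set Omega1) = Set.Ioo (Omega1.mk a ha1) (Omega1.mk (x.toOrdinal + 1) hx1) := by
      ext y
      simp only [Set.mem_singleton_iff, Set.mem_Ioo]
      constructor
      · rintro rfl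
        refine ⟨lt_iff.2 ?_, lt_iff.2 ?_⟩
        · rw [mk_toOrdinal, ← ha]; exact Order.lt_succ a
        · rw [mk_toOrdinal, Ordinal.add_one_eq_succ]; exact Order.lt_succ _
      · rintro ⟨h1, h2⟩
        have h1' := lt_iff.1 h1
        have h2' := lt_iff.1 h2
        rw [mk_toOrdinal] at h1'
        rw [mk_toOrdinal, Ordinal.add_one_eq_succ, Order.lt_succ_iff] at h2'
        have h1'' : x.toOrdinal ≤ y.toOrdinal := by
          rw [← ha, Order.succ_le_iff]; exact h1'
        exact ext' (le_antisymm h2' h1'')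
    rw [this]; exact isOpen_Ioo
  · exact absurd hl h

theorem continuousAt_of_isolated {f : Omega1 → Omega1} {x : Omega1}
    (h : ¬ Order.IsSuccLimit x.toOrdinal) : ContinuousAt f x := by
  have := (isOpen_singleton_iff_nhds_eq_pure x).1 (isOpen_singleton_of_not_limit h)
  unfold ContinuousAt
  rw [this]
  exact tendsto_pure_nhds f x

theorem not_limit_of_lt_omega0 {o : Ordinal} (h : o < Ordinal.omega0) : ¬ Order.IsSuccLimit o :=
  fun hl => absurd (Ordinal.omega0_le_of_isSuccLimit hl) h.not_ge

end Aux

namespace Aux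

/-- Swap of two isolated points is a homeomorphism. -/
theorem continuous_swap {a b : Omega1} (ha : IsOpen ({a} : Set Omega1))
    (hb : IsOpen ({b} : Set Omega1)) : Continuous (Equiv.swap a b) := by
  rw [continuous_iff_continuousAt]
  intro x
  by_cases hxa : x = a
  · subst hxa
    unfold ContinuousAt
    rw [(isOpen_singleton_iff_nhds_eq_pure x).1 ha]
    exact tendsto_pure_nhds _ x
  by_cases hxb : x = b
  · subst hxb
    unfold ContinuousAt
    rw [(isOpen_singleton_iff_nhds_eq_pure x).1 hb]
    exact tendsto_pure_nhds _ x
  · have hU : ({a, b} : Set Omega1)ᶜ ∈ nhds x := by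
      refine IsOpen.mem_nhds ?_ ?_
      · exact (IsClosed.union isClosed_singleton isClosed_singleton).isOpen_compl
      · simp [hxa, hxb]
    have heq : (⇑(Equiv.swap a b) : Omega1 → Omega1) =ᶠ[nhds x] id := by
      filter_upwards [hU] with y hy
      simp only [Set.mem_compl_iff, Set.mem_insert_iff, Set.mem_singleton_iff, not_or] at hy
      exact Equiv.swap_apply_of_ne_of_ne hy.1 hy.2
    exact continuousAt_id.congr heq.symm

def swapHomeo (a b : Omega1) (ha : IsOpen ({a} : Set Omega1))
    (hb : IsOpen ({b} : Set Omega1)) : Omega1 ≃ₜ Omega1 where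
  toEquiv := Equiv.swap a b
  continuous_toFun := continuous_swap ha hb
  continuous_invFun := by
    show Continuous ⇑(Equiv.swap a b).symm
    rw [Equiv.symm_swap]
    exact continuous_swap ha hb

end Aux

namespace Aux

local notation "ω0" => Ordinal.omega0

theorem omega0_add_one_lt : ω0 + 1 < Ordinal.omega 1 :=
  add_lt_omega1 Ordinal.omega0_lt_omega_one one_lt_omega1

theorem two_omega_lt : ω0 + ω0 < Ordinal.omega 1 :=
  add_lt_omega1 Ordinal.omega0_lt_omega_one Ordinal.omega0_lt_omega_one

/-- The block-swap involution of `ω₁` exchanging `[0, ω]` and `[ω+1, ω·2]`. -/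
def phiFun (x : Omega1) : Omega1 :=
  if h : x.toOrdinal ≤ ω0 then
    Omega1.mk (ω0 + 1 + x.toOrdinal)
      (add_lt_omega1 omega0_add_one_lt x.toOrdinal_lt)
  else if h2 : x.toOrdinal ≤ ω0 + ω0 then
    Omega1.mk (x.toOrdinal - (ω0 + 1))
      (lt_of_le_of_lt (Ordinal.sub_le.2 le_add_self) x.toOrdinal_lt)
  else x

theorem phiFun_low {x : Omega1} (h : x.toOrdinal ≤ ω0) :
    (phiFun x).toOrdinal = ω0 + 1 + x.toOrdinal := by
  unfold phiFun; rw [dif_pos h]; rfl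

theorem phiFun_mid {x : Omega1} (h1 : ω0 < x.toOrdinal) (h2 : x.toOrdinal ≤ ω0 + ω0) :
    (phiFun x).toOrdinal = x.toOrdinal - (ω0 + 1) := by
  unfold phiFun; rw [dif_neg h1.not_ge, dif_pos h2]; rfl

theorem phiFun_high {x : Omega1} (h : ω0 + ω0 < x.toOrdinal) : phiFun x = x := by
  unfold phiFun
  rw [dif_neg, dif_neg h.not_ge]
  exact fun hle => absurd (hle.trans_lt (lt_of_le_of_lt le_self_add h)) (lt_irrefl _)

theorem one_add_le_omega0 {o : Ordinal} (h : o ≤ ω0) : 1 + o ≤ ω0 := by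
  calc 1 + o ≤ 1 + ω0 := add_le_add_right h 1
  _ = ω0 := Ordinal.one_add_omega0

theorem phiFun_low_bounds {x : Omega1} (h : x.toOrdinal ≤ ω0) :
    ω0 < (phiFun x).toOrdinal ∧ (phiFun x).toOrdinal ≤ ω0 + ω0 := by
  rw [phiFun_low h]
  constructor
  · have h1 : ω0 < ω0 + 1 := by
      rw [Ordinal.add_one_eq_succ]; exact Order.lt_succ _
    exact h1.trans_le le_self_add
  · rw [add_assoc]
    exact add_le_add_right (one_add_le_omega0 h) ω0

theorem phiFun_involutive : Function.Involutive phiFun := by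
  intro x
  rcases le_or_gt x.toOrdinal ω0 with h | h
  · have hb := phiFun_low_bounds h
    refine ext' ?_
    rw [phiFun_mid hb.1 hb.2, phiFun_low h]
    exact Ordinal.add_sub_cancel _ _
  · rcases le_or_gt x.toOrdinal (ω0 + ω0) with h2 | h2
    · have hy : (phiFun x).toOrdinal ≤ ω0 := by
        rw [phiFun_mid h h2]
        refine Ordinal.sub_le.2 ?_
        rw [add_assoc, Ordinal.one_add_omega0]
        exact h2
      refine ext' ?_
      rw [phiFun_low hy, phiFun_mid h h2]
      refine Ordinal.add_sub_cancel_of_le ?_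
      rw [Ordinal.add_one_eq_succ, Order.succ_le_iff]
      exact h
    · rw [phiFun_high h2, phiFun_high h2]

end Aux

namespace Aux

local notation "ω0" => Ordinal.omega0

theorem omega0_lt_add_one : ω0 < ω0 + 1 := by
  rw [Ordinal.add_one_eq_succ]; exact Order.lt_succ _

theorem omega0_lt_two_omega : ω0 < ω0 + ω0 :=
  omega0_lt_add_one.trans_le (add_le_add_right Ordinal.one_lt_omega0.le _)

theorem two_omega_lt_succ : ω0 + ω0 < ω0 + ω0 + 1 := by
  rw [Ordinal.add_one_eq_succ]; exact Order.lt_succ _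

theorem lt_add_one_iff_le {o a : Ordinal} : o < a + 1 ↔ o ≤ a := by
  rw [Ordinal.add_one_eq_succ, Order.lt_succ_iff]

theorem succ_two_omega_lt : ω0 + ω0 + 1 < Ordinal.omega 1 :=
  add_lt_omega1 two_omega_lt one_lt_omega1

theorem phiFun_continuousAt_omega {x : Omega1} (hx : x.toOrdinal = ω0) :
    ContinuousAt phiFun x := by
  have hxle : x.toOrdinal ≤ ω0 := hx.le
  have hval : phiFun x = Omega1.mk (ω0 + ω0) two_omega_lt := by
    refine ext' ?_
    rw [phiFun_low hxle, hx, mk_toOrdinal, add_assoc, Ordinal.one_add_omega0]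
  have hmemIio : Set.Iio (Omega1.mk (ω0 + 1) omega0_add_one_lt) ∈ nhds x :=
    isOpen_Iio.mem_nhds (lt_iff.2 (by rw [mk_toOrdinal, hx]; exact omega0_lt_add_one))
  unfold ContinuousAt
  rw [hval, tendsto_order]
  constructor
  · intro c hc
    have hc' : c.toOrdinal < ω0 + ω0 := by
      have := lt_iff.1 hc; rwa [mk_toOrdinal] at this
    rcases lt_or_ge c.toOrdinal ω0 with hcw | hcw
    · filter_upwards [hmemIio] with y hy
      have hyle : y.toOrdinal ≤ ω0 := by
        have := lt_iff.1 hy; rw [mk_toOrdinal, lt_add_one_iff_le] at this; exact this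
      exact lt_iff.2 (hcw.trans (phiFun_low_bounds hyle).1)
    · have hcd : ω0 + (c.toOrdinal - ω0) = c.toOrdinal := Ordinal.add_sub_cancel_of_le hcw
      have hd : c.toOrdinal - ω0 < ω0 := by
        refine (add_lt_add_iff_left ω0).1 ?_
        rw [hcd]; exact hc'
      have hdlt : c.toOrdinal - ω0 < Ordinal.omega 1 := hd.trans Ordinal.omega0_lt_omega_one
      have hmem : Set.Ioo (Omega1.mk (c.toOrdinal - ω0) hdlt)
          (Omega1.mk (ω0 + 1) omega0_add_one_lt) ∈ nhds x := by
        refine isOpen_Ioo.mem_nhds ⟨lt_iff.2 ?_, lt_iff.2 ?_⟩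
        · rw [mk_toOrdinal, hx]; exact hd
        · rw [mk_toOrdinal, hx]; exact omega0_lt_add_one
      filter_upwards [hmem] with y hy
      obtain ⟨hy1, hy2⟩ := hy
      have hyle : y.toOrdinal ≤ ω0 := by
        have := lt_iff.1 hy2; rw [mk_toOrdinal, lt_add_one_iff_le] at this; exact this
      have hdy : c.toOrdinal - ω0 < y.toOrdinal := by
        have := lt_iff.1 hy1; rwa [mk_toOrdinal] at this
      refine lt_iff.2 ?_
      rw [phiFun_low hyle, ← hcd, add_assoc]
      exact add_lt_add_right (hdy.trans_le le_add_self) ω0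
  · intro c hc
    have hc' : ω0 + ω0 < c.toOrdinal := by
      have := lt_iff.1 hc; rwa [mk_toOrdinal] at this
    filter_upwards [hmemIio] with y hy
    have hyle : y.toOrdinal ≤ ω0 := by
      have := lt_iff.1 hy; rw [mk_toOrdinal, lt_add_one_iff_le] at this; exact this
    exact lt_iff.2 ((phiFun_low_bounds hyle).2.trans_lt hc')

theorem phiFun_continuousAt_two_omega {x : Omega1} (hx : x.toOrdinal = ω0 + ω0) :
    ContinuousAt phiFun x := by
  have hx1 : ω0 < x.toOrdinal := by rw [hx]; exact omega0_lt_two_omega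
  have hx2 : x.toOrdinal ≤ ω0 + ω0 := hx.le
  have hval : phiFun x = Omega1.mk ω0 Ordinal.omega0_lt_omega_one := by
    refine ext' ?_
    rw [phiFun_mid hx1 hx2, hx, mk_toOrdinal]
    have : ω0 + ω0 = ω0 + 1 + ω0 := by rw [add_assoc, Ordinal.one_add_omega0]
    rw [this, Ordinal.add_sub_cancel]
  unfold ContinuousAt
  rw [hval, tendsto_order]
  constructor
  · intro c hc
    have hc' : c.toOrdinal < ω0 := by
      have := lt_iff.1 hc; rwa [mk_toOrdinal] at this
    have hlow : ω0 + 1 + c.toOrdinal < Ordinal.omega 1 :=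
      add_lt_omega1 omega0_add_one_lt (hc'.trans Ordinal.omega0_lt_omega_one)
    have hmem : Set.Ioo (Omega1.mk (ω0 + 1 + c.toOrdinal) hlow)
        (Omega1.mk (ω0 + ω0 + 1) succ_two_omega_lt) ∈ nhds x := by
      refine isOpen_Ioo.mem_nhds ⟨lt_iff.2 ?_, lt_iff.2 ?_⟩
      · rw [mk_toOrdinal, hx, add_assoc]
        exact add_lt_add_right (Ordinal.principal_add_omega0 Ordinal.one_lt_omega0 hc') ω0
      · rw [mk_toOrdinal, hx]; exact two_omega_lt_succ
    filter_upwards [hmem] with y hy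
    obtain ⟨hy1, hy2⟩ := hy
    have hy1' : ω0 + 1 + c.toOrdinal < y.toOrdinal := by
      have := lt_iff.1 hy1; rwa [mk_toOrdinal] at this
    have hyg : ω0 < y.toOrdinal :=
      (omega0_lt_add_one.trans_le le_self_add).trans hy1'
    have hyge : ω0 + 1 ≤ y.toOrdinal := by
      rw [Ordinal.add_one_eq_succ, Order.succ_le_iff]; exact hyg
    have hyle : y.toOrdinal ≤ ω0 + ω0 := by
      have := lt_iff.1 hy2; rw [mk_toOrdinal, lt_add_one_iff_le] at this; exact this
    refine lt_iff.2 ?_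
    rw [phiFun_mid hyg hyle]
    by_contra hle
    rw [not_lt] at hle
    have := add_le_add_right hle (ω0 + 1)
    rw [Ordinal.add_sub_cancel_of_le hyge] at this
    exact absurd (hy1'.trans_le this) (lt_irrefl _)
  · intro c hc
    have hc' : ω0 < c.toOrdinal := by
      have := lt_iff.1 hc; rwa [mk_toOrdinal] at this
    have hmem : Set.Ioo (Omega1.mk ω0 Ordinal.omega0_lt_omega_one)
        (Omega1.mk (ω0 + ω0 + 1) succ_two_omega_lt) ∈ nhds x := by
      refine isOpen_Ioo.mem_nhds ⟨lt_iff.2 ?_, lt_iff.2 ?_⟩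
      · rw [mk_toOrdinal, hx]; exact omega0_lt_two_omega
      · rw [mk_toOrdinal, hx]; exact two_omega_lt_succ
    filter_upwards [hmem] with y hy
    obtain ⟨hy1, hy2⟩ := hy
    have hyg : ω0 < y.toOrdinal := by
      have := lt_iff.1 hy1; rwa [mk_toOrdinal] at this
    have hyle : y.toOrdinal ≤ ω0 + ω0 := by
      have := lt_iff.1 hy2; rw [mk_toOrdinal, lt_add_one_iff_le] at this; exact this
    refine lt_iff.2 ?_
    rw [phiFun_mid hyg hyle]
    refine lt_of_le_of_lt ?_ hc'
    refine Ordinal.sub_le.2 ?_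
    rw [add_assoc, Ordinal.one_add_omega0]
    exact hyle

theorem phiFun_continuous : Continuous phiFun := by
  rw [continuous_iff_continuousAt]
  intro x
  by_cases hl : Order.IsSuccLimit x.toOrdinal
  · rcases le_or_gt x.toOrdinal ω0 with h | h
    · exact phiFun_continuousAt_omega (le_antisymm h (Ordinal.omega0_le_of_isSuccLimit hl))
    rcases le_or_gt x.toOrdinal (ω0 + ω0) with h2 | h2
    · refine phiFun_continuousAt_two_omega ?_
      by_contra hne
      have hlt : x.toOrdinal < ω0 + ω0 := lt_of_le_of_ne h2 hne
      have hcd : ω0 + (x.toOrdinal - ω0) = x.toOrdinal := Ordinal.add_sub_cancel_of_le h.le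
      have hd : x.toOrdinal - ω0 < ω0 := by
        refine (add_lt_add_iff_left ω0).1 ?_
        rw [hcd]; exact hlt
      obtain ⟨m, hm⟩ := Ordinal.lt_omega0.1 hd
      match m, hm with
      | 0, hm =>
        rw [Nat.cast_zero] at hm
        rw [hm, add_zero] at hcd
        exact absurd hcd.symm h.ne'
      | (k+1), hm =>
        have hxval : x.toOrdinal = Order.succ (ω0 + k) := by
          rw [← hcd, hm]
          push_cast
          rw [← add_assoc, Ordinal.add_one_eq_succ]
        have hklt : ω0 + (k : Ordinal) < x.toOrdinal := by
          rw [hxval]; exact Order.lt_succ _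
        have := hl.succ_lt hklt
        rw [← hxval] at this
        exact absurd this (lt_irrefl _)
    · have hU : Set.Ioi (Omega1.mk (ω0 + ω0) two_omega_lt) ∈ nhds x :=
        isOpen_Ioi.mem_nhds ((lt_iff (x := Omega1.mk (ω0 + ω0) two_omega_lt) (y := x)).2 (by rw [mk_toOrdinal]; exact h2))
      have heq : phiFun =ᶠ[nhds x] id := by
        filter_upwards [hU] with y hy
        refine phiFun_high ?_
        have := lt_iff.1 (Set.mem_Ioi.1 hy); rwa [mk_toOrdinal] at this
      exact continuousAt_id.congr heq.symm
  · exact continuousAt_of_isolated hl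

/-- The block-swap homeomorphism of `ω₁`; it moves `ω` to `ω·2`. -/
def phiHomeo : Omega1 ≃ₜ Omega1 where
  toEquiv := Function.Involutive.toPerm phiFun phiFun_involutive
  continuous_toFun := phiFun_continuous
  continuous_invFun := phiFun_continuous

end Aux

namespace Aux

local notation "ω0" => Ordinal.omega0

theorem continuous_eval (x : Omega1) :
    Continuous (fun g : Omega1 ≃ₜ Omega1 => g x) :=
  (continuous_apply x).comp continuous_induced_dom

theorem natElt_toOrdinal (k : ℕ) : (natElt k).toOrdinal = (k : Ordinal) := rfl

theorem natElt_injective : Function.Injective natElt := fun a b h => by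
  have : (a : Ordinal) = (b : Ordinal) := congrArg Omega1.toOrdinal h
  exact_mod_cast this

theorem isOpen_singleton_natElt (k : ℕ) : IsOpen ({natElt k} : Set Omega1) :=
  isOpen_singleton_of_not_limit (not_limit_of_lt_omega0 (Ordinal.nat_lt_omega0 k))

theorem isOpen_T (n : ℕ) : IsOpen (T n) := by
  refine isOpen_biUnion fun k _ => ?_
  have : {g : Omega1 ≃ₜ Omega1 | g (natElt k) = natElt k}
      = (fun g : Omega1 ≃ₜ Omega1 => g (natElt k)) ⁻¹' {natElt k} := rfl
  rw [this]
  exact (isOpen_singleton_natElt k).preimage (continuous_eval (natElt k))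

theorem dense_T (n : ℕ) : Dense (T n) := by
  rw [dense_iff_inter_open]
  rintro U hU ⟨g₀, hg₀⟩
  obtain ⟨s, hs, rfl⟩ := isOpen_induced_iff.1 hU
  obtain ⟨I, u, hIu, hsub⟩ := isOpen_pi_iff.1 hs _ hg₀
  have hBfin : {k : ℕ | natElt k ∈ (I : Set Omega1) ∨ g₀.symm (natElt k) ∈ (I : Set Omega1)}.Finite := by
    refine Set.Finite.subset (Set.Finite.union
      (Set.Finite.preimage natElt_injective.injOn I.finite_toSet)
      (Set.Finite.preimage ((g₀.symm.injective.comp natElt_injective).injOn) I.finite_toSet)) ?_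
    intro k hk
    exact hk
  obtain ⟨k, hk⟩ := ((hBfin.union (Set.finite_Iio n)).infinite_compl).nonempty
  rw [Set.mem_compl_iff, Set.mem_union, not_or] at hk
  obtain ⟨hkB, hkn⟩ := hk
  have hkn' : n ≤ k := not_lt.1 (by simpa using hkn)
  rw [Set.mem_setOf_eq, not_or] at hkB
  obtain ⟨hk1, hk2⟩ := hkB
  set a := natElt k with ha
  set b := g₀.symm a with hb
  have hb_open : IsOpen ({b} : Set Omega1) := by
    have : ({b} : Set Omega1) = g₀.symm '' {a} := by simp [hb]
    rw [this]
    exact g₀.symm.isOpenMap _ (isOpen_singleton_natElt k)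
  set h := (swapHomeo a b (isOpen_singleton_natElt k) hb_open).trans g₀ with hh
  have hswap : ∀ y : Omega1, h y = g₀ (Equiv.swap a b y) := fun y => rfl
  refine ⟨h, ?_, ?_⟩
  · show (h : Omega1 → Omega1) ∈ s
    refine hsub ?_
    rw [Set.mem_pi]
    intro i hi
    have hia : i ≠ a := fun e => hk1 (e ▸ hi)
    have hib : i ≠ b := fun e => hk2 (e ▸ hi)
    have : h i = g₀ i := by rw [hswap, Equiv.swap_apply_of_ne_of_ne hia hib]
    rw [this]
    exact (hIu i hi).2
  · refine Set.mem_biUnion hkn' ?_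
    show h a = a
    rw [hswap, Equiv.swap_apply_left, hb]
    exact g₀.apply_symm_apply a

theorem tendsto_natElt {f : ℕ → ℕ} (hf : ∀ n, n ≤ f n) :
    Filter.Tendsto (fun n => natElt (f n)) Filter.atTop (nhds omegaElt) := by
  rw [tendsto_order]
  constructor
  · intro c hc
    have hc' : c.toOrdinal < ω0 := lt_iff.1 hc
    obtain ⟨m, hm⟩ := Ordinal.lt_omega0.1 hc'
    filter_upwards [Filter.eventually_ge_atTop (m + 1)] with n hn
    refine lt_iff.2 ?_
    rw [natElt_toOrdinal, hm]
    have : m < f n := lt_of_lt_of_le (Nat.lt_succ_self m) (hn.trans (hf n))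
    exact_mod_cast this
  · intro c hc
    filter_upwards with n
    refine lt_iff.2 ?_
    calc (natElt (f n)).toOrdinal < ω0 := Ordinal.nat_lt_omega0 _
    _ < c.toOrdinal := lt_iff.1 hc

theorem isClosed_fix : IsClosed {g : Omega1 ≃ₜ Omega1 | g omegaElt = omegaElt} := by
  have : {g : Omega1 ≃ₜ Omega1 | g omegaElt = omegaElt}
      = (fun g : Omega1 ≃ₜ Omega1 => g omegaElt) ⁻¹' {omegaElt} := rfl
  rw [this]
  exact IsClosed.preimage (continuous_eval omegaElt) isClosed_singleton

theorem inter_subset :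
    (⋂ n ∈ {n : ℕ | 0 < n}, T n) ⊆ {g : Omega1 ≃ₜ Omega1 | g omegaElt = omegaElt} := by
  intro g hg
  simp only [Set.mem_iInter] at hg
  have hfix : ∀ n : ℕ, ∃ k, n ≤ k ∧ g (natElt k) = natElt k := by
    intro n
    have := hg (n + 1) (Nat.succ_pos n)
    obtain ⟨k, hk, hgk⟩ := Set.mem_iUnion₂.1 this
    exact ⟨k, (Nat.le_succ n).trans hk, hgk⟩
  choose f hf1 hf2 using hfix
  have h1 : Filter.Tendsto (fun n => natElt (f n)) Filter.atTop (nhds omegaElt) :=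
    tendsto_natElt hf1
  have h2 : Filter.Tendsto (fun n => g (natElt (f n))) Filter.atTop (nhds (g omegaElt)) :=
    (g.continuous.tendsto omegaElt).comp h1
  have h3 : (fun n => g (natElt (f n))) = fun n => natElt (f n) := funext fun n => hf2 n
  rw [h3] at h2
  exact tendsto_nhds_unique h2 h1

theorem phi_ne : phiHomeo omegaElt ≠ omegaElt := by
  intro h
  have hval : (phiHomeo omegaElt).toOrdinal = ω0 + 1 + ω0 :=
    phiFun_low (le_refl ω0)
  have h2 : (ω0 + 1 + ω0 : Ordinal) = ω0 := by rw [← hval, h]; rfl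
  rw [add_assoc, Ordinal.one_add_omega0] at h2
  exact absurd h2 omega0_lt_two_omega.ne'

end Aux

/-- `Homeo(ω₁)` is not a Baire space: the sets `T n` are dense open, but their
intersection is contained in the proper closed subgroup of homeomorphisms
fixing `ω`, hence is not dense. -/
theorem homeoOmega1_not_baire :
    (∀ n : ℕ, 0 < n → IsOpen (T n) ∧ Dense (T n)) ∧
    (⋂ n ∈ {n : ℕ | 0 < n}, T n) ⊆ {g : Omega1 ≃ₜ Omega1 | g omegaElt = omegaElt} ∧
    IsClosed {g : Omega1 ≃ₜ Omega1 | g omegaElt = omegaElt} ∧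
    {g : Omega1 ≃ₜ Omega1 | g omegaElt = omegaElt} ≠ Set.univ ∧
    ¬ Dense (⋂ n ∈ {n : ℕ | 0 < n}, T n) ∧
    ¬ BaireSpace (Omega1 ≃ₜ Omega1) := by
  have hne : {g : Omega1 ≃ₜ Omega1 | g omegaElt = omegaElt} ≠ Set.univ := by
    intro h
    have : Aux.phiHomeo ∈ {g : Omega1 ≃ₜ Omega1 | g omegaElt = omegaElt} :=
      h ▸ Set.mem_univ _
    exact Aux.phi_ne this
  have hnotdense : ¬ Dense (⋂ n ∈ {n : ℕ | 0 < n}, T n) := by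
    intro hd
    have hsub : closure (⋂ n ∈ {n : ℕ | 0 < n}, T n)
        ⊆ {g : Omega1 ≃ₜ Omega1 | g omegaElt = omegaElt} := by
      rw [← Aux.isClosed_fix.closure_eq]
      exact closure_mono Aux.inter_subset
    rw [hd.closure_eq] at hsub
    exact hne (Set.univ_subset_iff.1 hsub)
  refine ⟨fun n _ => ⟨Aux.isOpen_T n, Aux.dense_T n⟩, Aux.inter_subset, Aux.isClosed_fix,
    hne, hnotdense, ?_⟩
  intro hb
  exact hnotdense (dense_biInter_of_isOpen (fun n _ => Aux.isOpen_T n)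
    (Set.to_countable _) fun n _ => Aux.dense_T n)
end
end
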